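/- arXiv:2502.08738 — 2 statements merged into one kernel-verified Lean document; each statement's English description precedes it below -/
import Mathlib

section
/- For all i with 1 ≤ i ≤ n−1, the operator identity φ_i ∘ ξ_i = s_i ∘ φ_{i+1} holds on ℚ[x_1,…,x_n], where φ_j(f) = f|_{x_j = 0}, ξ_i is the isobaric divided difference in variables x_i, x_{i+1}, and s_i swaps the variables x_i and x_{i+1}. -/
open MvPolynomial

/-- For `1 ≤ i ≤ n−1`, the operator identity `φ_i ∘ ξ_i = s_i ∘ φ_{i+1}`
holds on `ℚ[x_1,…,x_n]`.  Here the variables are indexed by `Fin n`, `φ_j` sets the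
variable `x_j` to `0`, `s_i` swaps the variables `x_i` and `x_{i+1}`, and `ξ_i` is the
isobaric divided difference, encoded by its defining relation
`(x_i − x_{i+1})·ξ_i(f) = x_i·f − x_{i+1}·s_i(f)`. -/
theorem phi_xi_eq_swap_phi (n : ℕ) (i j : Fin n) (hij : (j : ℕ) = (i : ℕ) + 1)
    (f g : MvPolynomial (Fin n) ℚ)
    (hg : (X i - X j) * g = X i * f - X j * rename (Equiv.swap i j) f) :
    aeval (fun k : Fin n => if k = i then 0 else X k : Fin n → MvPolynomial (Fin n) ℚ) g =
      rename (Equiv.swap i j)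
        (aeval (fun k : Fin n => if k = j then 0 else X k : Fin n → MvPolynomial (Fin n) ℚ) f) := by
  have hne : i ≠ j := by
    intro h; subst h; omega
  set v : Fin n → MvPolynomial (Fin n) ℚ := fun k => if k = i then 0 else X k with hv
  have h1 := congrArg (aeval v) hg
  simp only [map_mul, map_sub, aeval_X, hv, eq_self_iff_true, if_true, if_neg (Ne.symm hne)] at h1
  rw [zero_sub, zero_mul, zero_sub, neg_mul, neg_inj] at h1
  have h2 : aeval v g = aeval v (rename (Equiv.swap i j) f) :=
    mul_left_cancel₀ (X_ne_zero j) h1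
  have h3 : rename (Equiv.swap i j)
      ((aeval (fun k : Fin n => if k = j then 0 else X k : Fin n → MvPolynomial (Fin n) ℚ)) f)
      = aeval (fun k : Fin n =>
          rename (Equiv.swap i j) (if k = j then (0 : MvPolynomial (Fin n) ℚ) else X k)) f := by
    rw [← AlgHom.comp_apply, comp_aeval]
  have hfun : (v ∘ (Equiv.swap i j)) = fun k : Fin n =>
      rename (Equiv.swap i j) (if k = j then (0 : MvPolynomial (Fin n) ℚ) else X k) := by
    funext k
    by_cases hk : k = j
    · simp [hk, Equiv.swap_apply_right, hv]
    · by_cases hki : k = i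
      · simp [hki, hk, Equiv.swap_apply_left, hv, Ne.symm hne, hne]
      · simp [hk, hki, Equiv.swap_apply_of_ne_of_ne hki hk, hv]
  rw [h2, aeval_rename, h3, hfun]
end

section
/- The Weyl symmetrizer satisfies the stability property W_{x_1,…,x_n}(f)|_{x_n=0} = W_{x_1,…,x_{n-1}}(f|_{x_n=0}) for all f ∈ R[x_1,…,x_n]. -/
open MvPolynomial

/-- The Vandermonde product `∏_{0 ≤ i < j < n} (x_i − x_j)` in the variables
`x_0, x_1, …` (indexed by `ℕ`). -/
noncomputable def vand (R : Type*) [CommRing R] (n : ℕ) : MvPolynomial ℕ R :=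
  ∏ i ∈ Finset.range n, ∏ j ∈ (Finset.range n).filter (fun j => i < j), (X i - X j)

/-- The alternating sum `∑_{σ∈S_n} (−1)^{ℓ(σ)} σ(x_0^{n-1} x_1^{n-2} ⋯ x_{n-2} · f)`,
where `σ ∈ S_n` acts by permuting the first `n` variables.  The Weyl symmetrizer
`W_{x_1,…,x_n}(f)` is the quotient of this by the Vandermonde product. -/
noncomputable def altSum (R : Type*) [CommRing R] (n : ℕ) (f : MvPolynomial ℕ R) :
    MvPolynomial ℕ R :=
  ∑ σ : Equiv.Perm (Fin n), (Equiv.Perm.sign σ : ℤ) •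
    rename (fun k : ℕ => if h : k < n then ((σ ⟨k, h⟩ : Fin n) : ℕ) else k)
      ((∏ i ∈ Finset.range n, X i ^ (n - 1 - i)) * f)

lemma xreg {R : Type*} [CommRing R] (i : ℕ) : IsLeftRegular (X i : MvPolynomial ℕ R) := by
  intro a b h
  ext m
  have := congrArg (coeff (Finsupp.single i 1 + m)) h
  simpa [coeff_X_mul] using this

lemma subreg {R : Type*} [CommRing R] {i j : ℕ} (hij : i ≠ j) :
    IsLeftRegular (X i - X j : MvPolynomial ℕ R) := by
  set w : ℕ → MvPolynomial ℕ R := fun k => if k = j then X i - X j else X k with hw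
  have hpsi : ∀ p : MvPolynomial ℕ R, aeval w (aeval w p) = p := by
    intro p
    rw [← AlgHom.comp_apply, MvPolynomial.comp_aeval]
    have : (fun k => aeval w (w k)) = (X : ℕ → MvPolynomial ℕ R) := by
      funext k
      by_cases hk : k = j
      · subst hk
        simp only [hw, if_pos rfl, if_true, map_sub, aeval_X, if_neg hij]
        ring
      · simp [hw, hk]
    rw [this, aeval_X_left_apply]
  have hinj : Function.Injective (aeval w : MvPolynomial ℕ R → MvPolynomial ℕ R) :=
    Function.LeftInverse.injective hpsi
  intro a b h
  have h2 := congrArg (aeval w) h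
  simp only [map_mul, map_sub, aeval_X, hw, if_neg hij, if_pos rfl, if_true] at h2
  have h3 : X j * aeval w a = X j * aeval w b := by
    have he : X i - (X i - X j) = (X j : MvPolynomial ℕ R) := by ring
    simpa [hw, he] using h2
  exact hinj (xreg j h3)


lemma vandreg (R : Type*) [CommRing R] (n : ℕ) : IsLeftRegular (vand R n) := by
  unfold vand
  refine Finset.prod_induction _ IsLeftRegular (fun a b ha hb => ha.mul hb) isRegular_one.left ?_
  intro i _
  refine Finset.prod_induction _ IsLeftRegular (fun a b ha hb => ha.mul hb) isRegular_one.left ?_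
  intro j hj
  rw [Finset.mem_filter] at hj
  exact subreg (Nat.ne_of_lt hj.2)

lemma prodXreg (R : Type*) [CommRing R] (n : ℕ) :
    IsLeftRegular (∏ i ∈ Finset.range n, (X i : MvPolynomial ℕ R)) := by
  refine Finset.prod_induction _ IsLeftRegular (fun a b ha hb => ha.mul hb) isRegular_one.left ?_
  exact fun i _ => xreg i

-- evaluation of vand
lemma vand_eval (R : Type*) [CommRing R] (n : ℕ) :
    aeval (fun k : ℕ => if k = n then 0 else X k : ℕ → MvPolynomial ℕ R) (vand R (n + 1)) =
      (∏ i ∈ Finset.range n, (X i : MvPolynomial ℕ R)) * vand R n := by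
  set S : ℕ → MvPolynomial ℕ R := fun k => if k = n then 0 else X k with hS
  have step : vand R (n + 1) =
      (∏ i ∈ Finset.range n, (X i - X n)) * vand R n := by
    unfold vand
    rw [Finset.prod_range_succ]
    have hlast : (Finset.range (n+1)).filter (fun j => n < j) = ∅ := by
      ext j; simp
    rw [hlast, Finset.prod_empty, mul_one]
    rw [← Finset.prod_mul_distrib]
    apply Finset.prod_congr rfl
    intro i hi
    rw [Finset.mem_range] at hi
    have hfil : (Finset.range (n+1)).filter (fun j => i < j) =
        insert n ((Finset.range n).filter (fun j => i < j)) := by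
      ext j; simp [Finset.mem_insert]; omega
    rw [hfil, Finset.prod_insert (by simp)]
  rw [step, map_mul]
  congr 1
  · rw [map_prod]
    apply Finset.prod_congr rfl
    intro i hi
    rw [Finset.mem_range] at hi
    rw [map_sub, aeval_X, aeval_X, hS]
    simp only [if_pos rfl, if_true, if_neg (Nat.ne_of_lt hi), sub_zero]
  · unfold vand
    rw [map_prod]
    apply Finset.prod_congr rfl
    intro i hi
    rw [map_prod]
    apply Finset.prod_congr rfl
    intro j hj
    rw [Finset.mem_range] at hi
    rw [Finset.mem_filter, Finset.mem_range] at hj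
    rw [map_sub, aeval_X, aeval_X, hS]
    simp only [if_neg (Nat.ne_of_lt hi), if_neg (Nat.ne_of_lt hj.1)]


-- the commuting lemma
lemma comm_lemma {R : Type*} [CommRing R] (n : ℕ) (a : ℕ → ℕ) (han : a n = n)
    (hak : ∀ k, k ≠ n → a k ≠ n) (p : MvPolynomial ℕ R) :
    aeval (fun k : ℕ => if k = n then 0 else X k : ℕ → MvPolynomial ℕ R) (rename a p) =
      rename a (aeval (fun k : ℕ => if k = n then 0 else X k : ℕ → MvPolynomial ℕ R) p) := by
  set S : ℕ → MvPolynomial ℕ R := fun k => if k = n then 0 else X k with hS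
  rw [aeval_rename, ← AlgHom.comp_apply, MvPolynomial.comp_aeval]
  have hfun : (S ∘ a) = fun k => rename a (S k) := by
    funext k
    by_cases hk : k = n
    · subst hk
      simp [hS, Function.comp, han]
    · simp [hS, Function.comp, hk, hak k hk]
  rw [hfun]

-- vanishing lemma
lemma vanish_lemma {R : Type*} [CommRing R] (n : ℕ) (σ : Equiv.Perm (Fin (n + 1)))
    (hσ : σ (Fin.last n) ≠ Fin.last n) (f : MvPolynomial ℕ R) :
    aeval (fun k : ℕ => if k = n then 0 else X k : ℕ → MvPolynomial ℕ R)
      (rename (fun k : ℕ => if h : k < n + 1 then ((σ ⟨k, h⟩ : Fin (n+1)) : ℕ) else k)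
        ((∏ i ∈ Finset.range (n + 1), X i ^ (n + 1 - 1 - i)) * f)) = 0 := by
  set S : ℕ → MvPolynomial ℕ R := fun k => if k = n then 0 else X k with hS
  set a : ℕ → ℕ := fun k => if h : k < n + 1 then ((σ ⟨k, h⟩ : Fin (n+1)) : ℕ) else k with ha
  simp only [map_mul]
  have hM : aeval S (rename a (∏ i ∈ Finset.range (n + 1), (X i : MvPolynomial ℕ R) ^ (n + 1 - 1 - i))) = 0 := by
    simp only [map_prod]
    set i₀ : Fin (n + 1) := σ⁻¹ (Fin.last n) with hi₀
    have hi₀n : (i₀ : ℕ) < n := by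
      have h1 : i₀ ≠ Fin.last n := by
        intro h
        apply hσ
        have h2 : σ i₀ = Fin.last n := by rw [hi₀]; exact σ.apply_symm_apply _
        rw [h] at h2
        exact h2
      have := i₀.isLt
      have : (i₀ : ℕ) ≠ n := fun h => h1 (Fin.ext h)
      omega
    apply Finset.prod_eq_zero (Finset.mem_range.mpr (by omega : (i₀ : ℕ) < n + 1))
    rw [map_pow, map_pow, rename_X, aeval_X]
    have haa : a (i₀ : ℕ) = n := by
      rw [ha]
      simp only [dif_pos i₀.isLt]
      have : (⟨(i₀ : ℕ), i₀.isLt⟩ : Fin (n + 1)) = i₀ := by ext; rfl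
      rw [this, hi₀]
      simp
    rw [haa, hS]
    simp only [if_pos rfl, if_true]
    exact zero_pow (by omega)
  rw [hM, zero_mul]

lemma altSum_eval {R : Type*} [CommRing R] (n : ℕ) (f : MvPolynomial ℕ R) :
    aeval (fun k : ℕ => if k = n then 0 else X k : ℕ → MvPolynomial ℕ R) (altSum R (n + 1) f) =
      (∏ i ∈ Finset.range n, (X i : MvPolynomial ℕ R)) *
        altSum R n (aeval (fun k : ℕ => if k = n then 0 else X k : ℕ → MvPolynomial ℕ R) f) := by
  set S : ℕ → MvPolynomial ℕ R := fun k => if k = n then 0 else X k with hS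
  set E : Equiv.Perm (Fin (n + 1)) ≃ Option (Fin n) × Equiv.Perm (Fin n) :=
    (Equiv.permCongr finSuccEquivLast).trans Equiv.Perm.decomposeOption with hE
  set G : Equiv.Perm (Fin (n + 1)) → MvPolynomial ℕ R := fun σ =>
    aeval S ((Equiv.Perm.sign σ : ℤ) •
      rename (fun k : ℕ => if h : k < n + 1 then ((σ ⟨k, h⟩ : Fin (n + 1)) : ℕ) else k)
        ((∏ i ∈ Finset.range (n + 1), X i ^ (n + 1 - 1 - i)) * f)) with hG
  have lhs_eq : aeval S (altSum R (n + 1) f) = ∑ σ : Equiv.Perm (Fin (n + 1)), G σ := by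
    rw [altSum, map_sum]
  rw [lhs_eq, ← Equiv.sum_comp E.symm G, Fintype.sum_prod_type, Fintype.sum_option]
  -- facts about E.symm
  have Esymm_apply : ∀ (o : Option (Fin n)) (τ : Equiv.Perm (Fin n)) (x : Fin (n + 1)),
      E.symm (o, τ) x = finSuccEquivLast.symm ((Equiv.Perm.decomposeOption.symm (o, τ))
        (finSuccEquivLast x)) := by
    intro o τ x
    rw [hE]
    rfl
  -- the some-part vanishes
  have hvanish : ∀ (i : Fin n) (τ : Equiv.Perm (Fin n)), G (E.symm (some i, τ)) = 0 := by
    intro i τ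
    have hlast : E.symm (some i, τ) (Fin.last n) ≠ Fin.last n := by
      rw [Esymm_apply]
      rw [finSuccEquivLast_last]
      simp only [Equiv.Perm.decomposeOption_symm_apply, Equiv.Perm.mul_apply,
        Equiv.optionCongr_apply, Option.map_none]
      rw [Equiv.swap_apply_left, finSuccEquivLast_symm_some]
      exact (Fin.castSucc_lt_last i).ne
    rw [hG]
    simp only []
    rw [map_zsmul]
    rw [vanish_lemma n _ hlast f, smul_zero]
  have hzero : ∀ i : Fin n, ∑ τ : Equiv.Perm (Fin n), G (E.symm (some i, τ)) = 0 := by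
    intro i
    rw [Finset.sum_eq_zero fun τ _ => hvanish i τ]
  rw [Finset.sum_eq_zero fun i _ => hzero i, add_zero]
  -- evaluate the monomial product
  have hM : aeval S (∏ i ∈ Finset.range (n + 1), (X i : MvPolynomial ℕ R) ^ (n + 1 - 1 - i)) =
      (∏ i ∈ Finset.range n, (X i : MvPolynomial ℕ R) ^ (n - 1 - i)) *
        ∏ i ∈ Finset.range n, (X i : MvPolynomial ℕ R) := by
    rw [map_prod, Finset.prod_range_succ]
    have h0 : n + 1 - 1 - n = 0 := by omega
    rw [map_pow, h0, pow_zero, mul_one, ← Finset.prod_mul_distrib]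
    apply Finset.prod_congr rfl
    intro i hi
    rw [Finset.mem_range] at hi
    rw [map_pow, aeval_X, hS]
    simp only [if_neg (Nat.ne_of_lt hi)]
    have he : n + 1 - 1 - i = (n - 1 - i) + 1 := by omega
    rw [he, pow_succ]
  -- the none part
  have hnone : ∀ τ : Equiv.Perm (Fin n), G (E.symm (none, τ)) =
      (∏ i ∈ Finset.range n, (X i : MvPolynomial ℕ R)) *
        ((Equiv.Perm.sign τ : ℤ) •
          rename (fun k : ℕ => if h : k < n then ((τ ⟨k, h⟩ : Fin n) : ℕ) else k)
            ((∏ i ∈ Finset.range n, X i ^ (n - 1 - i)) * aeval S f)) := by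
    intro τ
    set σ : Equiv.Perm (Fin (n + 1)) := E.symm (none, τ) with hσ
    set a : ℕ → ℕ := fun k => if h : k < n then ((τ ⟨k, h⟩ : Fin n) : ℕ) else k with ha
    have ha1 : ∀ (k : ℕ) (h : k < n), a k = ((τ ⟨k, h⟩ : Fin n) : ℕ) := fun k h => dif_pos h
    have ha2 : ∀ (k : ℕ), ¬ k < n → a k = k := fun k h => dif_neg h
    have hσx : ∀ x : Fin (n + 1), σ x = finSuccEquivLast.symm ((finSuccEquivLast x).map τ) := by
      intro x
      rw [hσ, Esymm_apply]
      congr 1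
      exact Equiv.Perm.decomposeOption_symm_of_none_apply τ _
    have haeq : (fun k : ℕ => if h : k < n + 1 then ((σ ⟨k, h⟩ : Fin (n + 1)) : ℕ) else k) = a := by
      funext k
      show (if h : k < n + 1 then ((σ ⟨k, h⟩ : Fin (n + 1)) : ℕ) else k) = a k
      rcases lt_trichotomy k n with hk | hk | hk
      · rw [dif_pos (by omega : k < n + 1), ha1 k hk]
        have hcast : (⟨k, by omega⟩ : Fin (n + 1)) = Fin.castSucc ⟨k, hk⟩ := rfl
        rw [hcast, hσx, finSuccEquivLast_castSucc]
        simp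
      · rw [dif_pos (by omega : k < n + 1), ha2 k (by omega)]
        have hcast : (⟨k, by omega⟩ : Fin (n + 1)) = Fin.last n := by
          ext; simpa using hk
        rw [hcast, hσx, finSuccEquivLast_last]
        simpa using hk.symm
      · rw [dif_neg (by omega), ha2 k (by omega)]
    have hsign : Equiv.Perm.sign σ = Equiv.Perm.sign τ := by
      have hrw : σ = Equiv.permCongr finSuccEquivLast.symm
          (Equiv.Perm.decomposeOption.symm (none, τ)) := by
        rw [hσ, hE]; rfl
      rw [hrw, Equiv.Perm.sign_permCongr, Equiv.Perm.decomposeOption_symm_sign]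
    have hacond1 : a n = n := ha2 n (lt_irrefl n)
    have hacond2 : ∀ k, k ≠ n → a k ≠ n := by
      intro k hk
      by_cases h : k < n
      · rw [ha1 k h]
        exact Nat.ne_of_lt (τ ⟨k, h⟩).isLt
      · rw [ha2 k h]; exact hk
    rw [hG]
    simp only []
    rw [map_zsmul, hsign, haeq, comm_lemma n a hacond1 hacond2]
    rw [map_mul (aeval S : MvPolynomial ℕ R →ₐ[R] MvPolynomial ℕ R), hM]
    have hring : ((∏ i ∈ Finset.range n, (X i : MvPolynomial ℕ R) ^ (n - 1 - i)) *
          ∏ i ∈ Finset.range n, (X i : MvPolynomial ℕ R)) * aeval S f =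
        (∏ i ∈ Finset.range n, (X i : MvPolynomial ℕ R)) *
          ((∏ i ∈ Finset.range n, (X i : MvPolynomial ℕ R) ^ (n - 1 - i)) * aeval S f) := by
      ring
    rw [hring, map_mul]
    have hB : rename a (∏ i ∈ Finset.range n, (X i : MvPolynomial ℕ R)) =
        ∏ i ∈ Finset.range n, (X i : MvPolynomial ℕ R) := by
      rw [map_prod]
      simp only [rename_X]
      rw [← Fin.prod_univ_eq_prod_range (fun i => (X (a i) : MvPolynomial ℕ R)) n]
      have hstep : ∀ i : Fin n, (X (a (i : ℕ)) : MvPolynomial ℕ R) = X ((τ i : Fin n) : ℕ) := by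
        intro i
        rw [ha1 (i : ℕ) i.isLt]
      rw [Finset.prod_congr rfl (fun i _ => hstep i)]
      rw [Equiv.prod_comp τ (fun j : Fin n => (X (j : ℕ) : MvPolynomial ℕ R))]
      exact Fin.prod_univ_eq_prod_range (fun i => (X i : MvPolynomial ℕ R)) n
    rw [hB, mul_smul_comm]
  rw [Finset.sum_congr rfl (fun τ _ => hnone τ), ← Finset.mul_sum, altSum]

/-- The Weyl symmetrizer satisfies the stability property
`W_{x_1,…,x_{n+1}}(f)|_{x_{n+1}=0} = W_{x_1,…,x_n}(f|_{x_{n+1}=0})`, over a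
commutative ring `R` of characteristic `0`.  Variables are `0`-indexed, so
`x_{n+1}` is the variable `X n`; `g` encodes `W_{x_1,…,x_{n+1}}(f)` and `g'`
encodes `W_{x_1,…,x_n}(f|_{x_{n+1}=0})` via the defining relation
`(Vandermonde) · W(f) = (alternating sum)`. -/
theorem weyl_symmetrizer_stability
    (R : Type*) [CommRing R] [CharZero R] (n : ℕ)
    (f g g' : MvPolynomial ℕ R)
    (hg : vand R (n + 1) * g = altSum R (n + 1) f)
    (hg' : vand R n * g' =
      altSum R n (aeval (fun k : ℕ => if k = n then 0 else X k : ℕ → MvPolynomial ℕ R) f)) :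
    aeval (fun k : ℕ => if k = n then 0 else X k : ℕ → MvPolynomial ℕ R) g = g' := by
  have h1 := congrArg (aeval (fun k : ℕ => if k = n then 0 else X k : ℕ → MvPolynomial ℕ R)) hg
  rw [map_mul, vand_eval, altSum_eval, ← hg'] at h1
  have hreg : IsLeftRegular ((∏ i ∈ Finset.range n, (X i : MvPolynomial ℕ R)) * vand R n) :=
    (prodXreg R n).mul (vandreg R n)
  exact hreg (h1.trans (mul_assoc _ _ _).symm)
end
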